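/- Let α > 0 and let m, k be real numbers with m ≥ 2 and k ≥ 2. Then there exists c ∈ (0, 1) such that for every r > 0: −g″(r)/g(r) − m·f′(r)·g′(r)/(f(r)·g(r)) + (k − 1)·(1 − g′(r)²)/g(r)² − g′(r)·h′(r)/(g(r)·h(r)) > 0, where f(r) = r·(1+r²)^(−1/4), g(r) = (π/2)·c·r/arctan r, and h(r) = (1+r²)^(−α/2). -/

import Mathlib

noncomputable def f (r : ℝ) : ℝ := r * (1 + r ^ 2) ^ (-(1 / 4 : ℝ))

noncomputable def g (c r : ℝ) : ℝ := (Real.pi / 2) * c * (r / Real.arctan r)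

noncomputable def h (α r : ℝ) : ℝ := (1 + r ^ 2) ^ (-(α / 2))

open Real


lemma my_arctan_pos {r : ℝ} (hr : 0 < r) : 0 < arctan r := by
  have := Real.arctan_strictMono hr
  rwa [Real.arctan_zero] at this

lemma my_arctan_le_self {r : ℝ} (hr : 0 ≤ r) : arctan r ≤ r := by
  have hmono : Monotone (fun x : ℝ => x - arctan x) := by
    apply monotone_of_deriv_nonneg
    · exact differentiable_id.sub Real.differentiable_arctan
    · intro x
      have hd : HasDerivAt (fun x : ℝ => x - arctan x) (1 - 1/(1+x^2)) x :=
        (hasDerivAt_id x).sub (Real.hasDerivAt_arctan x)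
      rw [hd.deriv]
      have h1 : (1:ℝ) ≤ 1 + x^2 := by nlinarith [sq_nonneg x]
      have : 1/(1+x^2) ≤ 1 := by
        rw [div_le_one (by linarith)]; linarith
      linarith
  have := hmono hr
  simp [Real.arctan_zero] at this
  linarith

lemma my_self_div_le_arctan {r : ℝ} (hr : 0 ≤ r) : r * (1+r^2)⁻¹ ≤ arctan r := by
  have hmono : Monotone (fun x : ℝ => arctan x - x * (1+x^2)⁻¹) := by
    apply monotone_of_deriv_nonneg
    · intro x
      have h0 : (1:ℝ) + x^2 ≠ 0 := by positivity
      exact ((Real.differentiable_arctan x).sub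
        ((differentiable_id.differentiableAt).mul
          (((differentiable_const (1:ℝ)).add (differentiable_pow 2)).differentiableAt.inv h0)))
    · intro x
      have h0 : (0:ℝ) < 1 + x^2 := by positivity
      have hsq : HasDerivAt (fun x : ℝ => 1 + x^2) (2*x) x := by
        simpa using ((hasDerivAt_pow 2 x).const_add 1)
      have hinv : HasDerivAt (fun x : ℝ => (1+x^2)⁻¹) (-(2*x)/(1+x^2)^2) x := hsq.inv h0.ne'
      have hd : HasDerivAt (fun x : ℝ => arctan x - x * (1+x^2)⁻¹)
          (1/(1+x^2) - (1 * (1+x^2)⁻¹ + x * (-(2*x)/(1+x^2)^2))) x :=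
        (Real.hasDerivAt_arctan x).sub ((hasDerivAt_id x).mul hinv)
      rw [hd.deriv]
      have : 1/(1+x^2) - (1 * (1+x^2)⁻¹ + x * (-(2*x)/(1+x^2)^2)) = 2*x^2/(1+x^2)^2 := by
        field_simp; ring
      rw [this]; positivity
  have := hmono hr
  simp [Real.arctan_zero] at this
  linarith

lemma my_div_one_add_le_arctan {r : ℝ} (hr : 0 ≤ r) : r / (1+r) ≤ arctan r := by
  have hmono : MonotoneOn (fun x : ℝ => arctan x - x / (1+x)) (Set.Ici 0) := by
    apply monotoneOn_of_deriv_nonneg (convex_Ici 0)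
    · apply ContinuousOn.sub Real.continuous_arctan.continuousOn
      apply ContinuousOn.div continuousOn_id (by fun_prop)
      intro x hx
      simp only [Set.mem_Ici] at hx
      positivity
    · intro x hx
      rw [interior_Ici] at hx
      simp only [Set.mem_Ioi] at hx
      have h0 : (1:ℝ) + x ≠ 0 := by positivity
      exact (((Real.differentiable_arctan x).sub
        ((differentiableAt_id).div (by fun_prop) h0))).differentiableWithinAt
    · intro x hx
      rw [interior_Ici] at hx
      simp only [Set.mem_Ioi] at hx
      have h0 : (0:ℝ) < 1 + x := by linarith
      have hd : HasDerivAt (fun x : ℝ => arctan x - x / (1+x))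
          (1/(1+x^2) - (1 * (1+x) - x * 1)/(1+x)^2) x :=
        (Real.hasDerivAt_arctan x).sub ((hasDerivAt_id x).div
          (by simpa using (hasDerivAt_id x).const_add 1) h0.ne')
      rw [hd.deriv]
      have h1 : (0:ℝ) < 1 + x^2 := by positivity
      rw [sub_nonneg, div_le_div_iff₀ (by positivity) h1]
      nlinarith [sq_nonneg (1-x)]
  have := hmono (Set.self_mem_Ici) (Set.mem_Ici.2 hr) hr
  simp [Real.arctan_zero] at this
  linarith

lemma hasDerivAt_sq (r : ℝ) : HasDerivAt (fun x : ℝ => 1 + x^2) (2*r) r := by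
  simpa using ((hasDerivAt_pow 2 r).const_add 1)

lemma hasDerivAt_base {q r : ℝ} :
    HasDerivAt (fun x : ℝ => (1 + x^2) ^ q) (q * (1+r^2) ^ (q-1) * (2*r)) r := by
  have h0 : (0:ℝ) < 1 + r^2 := by positivity
  exact (Real.hasDerivAt_rpow_const (p := q) (Or.inl h0.ne')).comp r (hasDerivAt_sq r)

lemma hasDerivAt_f {r : ℝ} (hr : 0 < r) :
    HasDerivAt f (f r * (1/r - r * (1+r^2)⁻¹ / 2)) r := by
  have h0 : (0:ℝ) < 1 + r^2 := by positivity
  have hd : HasDerivAt f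
      (1 * (1+r^2) ^ (-(1/4:ℝ)) + r * ((-(1/4)) * (1+r^2) ^ ((-(1/4:ℝ))-1) * (2*r))) r :=
    (hasDerivAt_id r).mul (hasDerivAt_base (q := -(1/4:ℝ)))
  convert hd using 1
  have key : (1+r^2) ^ ((-(1/4:ℝ))-1) = (1+r^2) ^ (-(1/4:ℝ)) / (1+r^2) := by
    rw [Real.rpow_sub h0, Real.rpow_one]
  rw [key, f]
  field_simp
  ring

lemma hasDerivAt_h {α r : ℝ} :
    HasDerivAt (h α) (h α r * (-(α * r * (1+r^2)⁻¹))) r := by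
  have h0 : (0:ℝ) < 1 + r^2 := by positivity
  have hd : HasDerivAt (h α) ((-(α/2)) * (1+r^2) ^ ((-(α/2))-1) * (2*r)) r :=
    hasDerivAt_base (q := -(α/2))
  convert hd using 1
  have key : (1+r^2) ^ ((-(α/2))-1) = (1+r^2) ^ (-(α/2)) / (1+r^2) := by
    rw [Real.rpow_sub h0, Real.rpow_one]
  rw [key, h]
  field_simp

lemma hasDerivAt_g {c r : ℝ} (hr : 0 < r) :
    HasDerivAt (g c)
      ((Real.pi/2) * c * ((arctan r - r * (1+r^2)⁻¹) / (arctan r)^2)) r := by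
  have ha : 0 < arctan r := my_arctan_pos hr
  have hd : HasDerivAt (fun x : ℝ => x / arctan x)
      ((1 * arctan r - r * (1/(1+r^2))) / (arctan r)^2) r :=
    (hasDerivAt_id r).div (Real.hasDerivAt_arctan r) ha.ne'
  have := hd.const_mul ((Real.pi/2) * c)
  exact this.congr_deriv (by rw [one_mul, one_div])

-- second derivative of g
lemma hasDerivAt_g' {c r : ℝ} (hr : 0 < r) :
    HasDerivAt (fun x => (Real.pi/2) * c * ((arctan x - x * (1+x^2)⁻¹) / (arctan x)^2))
      (g c r * (2 * ((1+r^2)⁻¹)^2 * (r - arctan r) / ((arctan r)^2 * r))) r := by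
  have ha : 0 < arctan r := my_arctan_pos hr
  have h0 : (0:ℝ) < 1 + r^2 := by positivity
  have hinv : HasDerivAt (fun x : ℝ => (1+x^2)⁻¹) (-(2*r)/(1+r^2)^2) r :=
    (hasDerivAt_sq r).inv h0.ne'
  have hN : HasDerivAt (fun x : ℝ => arctan x - x * (1+x^2)⁻¹)
      (1/(1+r^2) - (1 * (1+r^2)⁻¹ + r * (-(2*r)/(1+r^2)^2))) r :=
    (Real.hasDerivAt_arctan r).sub ((hasDerivAt_id r).mul hinv)
  have hD : HasDerivAt (fun x : ℝ => (arctan x)^2)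
      (2 * arctan r ^ 1 * (1/(1+r^2))) r := by
    simpa using (Real.hasDerivAt_arctan r).fun_pow 2
  have hDne : (arctan r)^2 ≠ 0 := by positivity
  have hd := (hN.div hD hDne).const_mul ((Real.pi/2) * c)
  refine hd.congr_deriv ?_
  rw [g]
  field_simp
  ring

set_option maxHeartbeats 1000000 in
/-- Ricci curvature positivity in the `S^k` directions for a suitable constant:
if `m ≥ 2` and `k ≥ 2`, then there exists `c ∈ (0,1)` such that for every `r > 0`,
`−g″/g − m·f′g′/(fg) + (k−1)(1−(g′)²)/g² − g′h′/(gh) > 0`, where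
`g(r) = (π/2)·c·r/arctan r`. -/
theorem statement14 (α : ℝ) (hα : 0 < α) (m k : ℝ) (hm : 2 ≤ m) (hk : 2 ≤ k) :
    ∃ c ∈ Set.Ioo (0 : ℝ) 1, ∀ r : ℝ, 0 < r →
      -(deriv (deriv (g c)) r / g c r)
        - m * (deriv f r * deriv (g c) r / (f r * g c r))
        + (k - 1) * ((1 - (deriv (g c) r) ^ 2) / (g c r) ^ 2)
        - deriv (g c) r * deriv (h α) r / (g c r * h α r) > 0 := by
  have hS : (7:ℝ) ≤ m + k + 3 := by linarith
  have hS0 : (0:ℝ) < m + k + 3 := by linarith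
  have hπ : Real.pi ≤ 4 := Real.pi_le_four
  have hπ0 : 0 < Real.pi := Real.pi_pos
  obtain ⟨c, hc0, hc1, hC⟩ :
      ∃ c : ℝ, 0 < c ∧ c < 1 ∧ ((Real.pi/2)*c)^2 * (4*(m+k+3)) ≤ 1 := by
    refine ⟨1/(2*(m+k+3)), by positivity, ?_, ?_⟩
    · rw [div_lt_one (by linarith)]; linarith
    · have he : ((Real.pi/2)*(1/(2*(m+k+3))))^2 * (4*(m+k+3))
          = Real.pi^2/(4*(m+k+3)) := by field_simp; ring
      rw [he, div_le_one (by positivity)]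
      nlinarith
  refine ⟨c, ⟨hc0, hc1⟩, ?_⟩
  intro r hr
  have h0 : (0:ℝ) < 1 + r^2 := by positivity
  have ha : 0 < arctan r := my_arctan_pos hr
  -- abbreviations
  set a : ℝ := arctan r with ha_def
  set p : ℝ := (1+r^2)⁻¹ with hp_def
  have hp : 0 < p := by rw [hp_def]; positivity
  have hP : (1+r^2) * p = 1 := by rw [hp_def]; field_simp
  set u : ℝ := (a - r*p)/(a*r) with hu_def
  set w : ℝ := 2*p^2*(r-a)/(a^2*r) with hw_def
  set X : ℝ := 1/r - r*p/2 with hX_def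
  set q : ℝ := a^2/(((Real.pi/2)*c)^2*r^2) with hq_def
  -- positivity of f, g, h
  have hgr : g c r = (Real.pi/2)*c*(r/a) := rfl
  have hgpos : 0 < g c r := by
    rw [hgr]; positivity
  have hfpos : 0 < f r := by
    have : (0:ℝ) < (1 + r ^ 2) ^ (-(1 / 4 : ℝ)) := Real.rpow_pos_of_pos h0 _
    exact mul_pos hr this
  have hhpos : 0 < h α r := Real.rpow_pos_of_pos h0 _
  have hgne := hgpos.ne'
  have hfne := hfpos.ne'
  have hhne := hhpos.ne'
  -- derivatives
  have hdg : deriv (g c) r = g c r * u := by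
    rw [(hasDerivAt_g hr).deriv, hgr, hu_def, hp_def, ha_def]
    field_simp
  have hev : deriv (g c) =ᶠ[nhds r]
      (fun x => (Real.pi/2) * c * ((arctan x - x * (1+x^2)⁻¹) / (arctan x)^2)) := by
    filter_upwards [Ioi_mem_nhds hr] with x hx
    exact (hasDerivAt_g hx).deriv
  have hddg : deriv (deriv (g c)) r = g c r * w := by
    rw [hev.deriv_eq, (hasDerivAt_g' hr).deriv, hw_def, hp_def, ha_def]
  have hdf : deriv f r = f r * X := by
    rw [(hasDerivAt_f hr).deriv, hX_def, hp_def]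
  have hdh : deriv (h α) r = h α r * (-(α*r*p)) := by
    rw [hasDerivAt_h.deriv, hp_def]
  rw [hddg, hdg, hdf, hdh]
  have e1 : g c r * w / g c r = w := by field_simp
  have e2 : f r * X * (g c r * u) / (f r * g c r) = X * u := by
    field_simp
  have e3 : (1 - (g c r * u)^2)/(g c r)^2 = q - u^2 := by
    rw [hgr, hq_def]
    field_simp
  have e4 : (g c r * u) * (h α r * (-(α*r*p)))/(g c r * h α r) = -(α*r*p*u) := by
    field_simp
  rw [e1, e2, e3, e4]
  clear e1 e2 e3 e4 hev hdg hddg hdf hdh hgr hgpos hfpos hhpos hgne hfne hhne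
  -- bounds
  have har : a ≤ r := my_arctan_le_self hr.le
  have hrpa : r*p ≤ a := by rw [ha_def, hp_def]; exact my_self_div_le_arctan hr.le
  have h1ra : r/(1+r) ≤ a := my_div_one_add_le_arctan hr.le
  have hu0 : 0 ≤ u := by
    rw [hu_def]
    exact div_nonneg (by linarith) (by positivity)
  have hu1 : u ≤ r*p := by
    rw [hu_def, div_le_iff₀ (by positivity)]
    calc a - r*p = a*((1+r^2)*p) - r*p := by rw [hP, mul_one]
      _ = (a*p - r*p) + a*(r^2*p) := by ring
      _ ≤ 0 + a*(r^2*p) := by linarith [mul_le_mul_of_nonneg_right har hp.le]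
      _ = r*p*(a*r) := by ring
  have hPr : r*p + r^3*p = r := by linear_combination r * hP
  have hra3 : r - a ≤ r^3*p := by linarith
  have h1 : r ≤ a*(1+r) := by
    rw [div_le_iff₀ (by linarith : (0:ℝ) < 1+r)] at h1ra
    linarith
  have h2a : r^2*p ≤ 2*a^2 := by
    have hsq : r*r ≤ (a*(1+r))*(a*(1+r)) :=
      mul_le_mul h1 h1 hr.le (mul_nonneg ha.le (by linarith))
    have hrec : (1+r)^2 ≤ 2*(1+r^2) := by nlinarith [sq_nonneg (1-r)]
    have ha2 : 0 ≤ a^2 := sq_nonneg a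
    have step1 : r^2 ≤ 2*a^2*(1+r^2) := by
      calc r^2 = r*r := sq r
        _ ≤ (a*(1+r))*(a*(1+r)) := hsq
        _ = a^2*(1+r)^2 := by ring
        _ ≤ a^2*(2*(1+r^2)) := mul_le_mul_of_nonneg_left hrec ha2
        _ = 2*a^2*(1+r^2) := by ring
    have step2 : r^2*p ≤ 2*a^2*(1+r^2)*p := mul_le_mul_of_nonneg_right step1 hp.le
    have : 2*a^2*(1+r^2)*p = 2*a^2 := by
      rw [mul_assoc, hP, mul_one]
    linarith
  have hw4 : w ≤ 4*p^2 := by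
    rw [hw_def, div_le_iff₀ (by positivity : (0:ℝ) < a^2*r)]
    linarith [mul_le_mul_of_nonneg_left h2a (by positivity : (0:ℝ) ≤ 2*p^2*r),
      mul_le_mul_of_nonneg_left hra3 (by positivity : (0:ℝ) ≤ 2*p^2)]
  have hC2 : (0:ℝ) < ((Real.pi/2)*c)^2 := by positivity
  have hq1 : p/(2*((Real.pi/2)*c)^2) ≤ q := by
    rw [hq_def, div_le_div_iff₀ (by positivity) (by positivity)]
    linarith [mul_le_mul_of_nonneg_left h2a hC2.le]
  have hq2 : p*(2*(m+k+3)) ≤ p/(2*((Real.pi/2)*c)^2) := by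
    rw [le_div_iff₀ (by positivity)]
    linarith [mul_le_mul_of_nonneg_left hC hp.le]
  have hqk : p*(2*(m+k+3)) ≤ q := le_trans hq2 hq1
  have hr2p : r^2*p ≤ 1 := by linarith [hP, hp]
  have hX1 : X ≤ 1/r := by
    rw [hX_def]
    linarith [mul_nonneg hr.le hp.le]
  have hX0 : 0 ≤ X := by
    rw [hX_def, sub_nonneg, div_le_div_iff₀ (by norm_num : (0:ℝ) < 2) hr]
    linarith [hr2p]
  have hXu : X*u ≤ p := by
    calc X*u ≤ (1/r)*(r*p) := mul_le_mul hX1 hu1 hu0 (by positivity)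
      _ = p := by field_simp
  have hu2 : u^2 ≤ p := by
    have step : u*u ≤ (r*p)*(r*p) := mul_le_mul hu1 hu1 hu0 (by positivity)
    have step2 : r^2*p*p ≤ 1*p := mul_le_mul_of_nonneg_right hr2p hp.le
    calc u^2 = u*u := sq u
      _ ≤ (r*p)*(r*p) := step
      _ = r^2*p*p := by ring
      _ ≤ 1*p := step2
      _ = p := one_mul p
  have hαu : 0 ≤ α*r*p*u := by positivity
  have hp1 : p ≤ 1 := by linarith [hP, mul_nonneg (sq_nonneg r) hp.le]
  have hpp : p^2 ≤ p := by
    calc p^2 = p*p := sq p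
      _ ≤ p*1 := mul_le_mul_of_nonneg_left hp1 hp.le
      _ = p := mul_one p
  have hmXu : m*(X*u) ≤ m*p := mul_le_mul_of_nonneg_left hXu (by linarith)
  have hkq : (k-1)*(p*(2*(m+k+3)) - p) ≤ (k-1)*(q - u^2) :=
    mul_le_mul_of_nonneg_left (by linarith) (by linarith)
  have A : (0:ℝ) ≤ (2*m+2*k+5)*p := mul_nonneg (by linarith) hp.le
  have B : 1*((2*m+2*k+5)*p) ≤ (k-1)*((2*m+2*k+5)*p) :=
    mul_le_mul_of_nonneg_right (by linarith : (1:ℝ) ≤ k-1) A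
  have Ceq : (k-1)*(p*(2*(m+k+3)) - p) = (k-1)*((2*m+2*k+5)*p) := by ring
  have E : 0 < (m+2*k+1)*p := mul_pos (by linarith) hp
  rw [Ceq] at hkq
  linarith [hkq, hmXu, hw4, hpp, hαu, B, E]
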